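/- (Stevanović) Let G = (V(G), E(G)) be a connected finite simple graph on at least 2 vertices with largest adjacency eigenvalue λ₀(G), and let v be the principal eigenvector of G, i.e., the entrywise positive eigenvector of the adjacency matrix with eigenvalue λ₀(G) normalized to Euclidean norm 1. For each vertex x of G, let G - x denote the subgraph of G induced on V(G) \ {x}, with largest eigenvalue λ₀(G - x). Then ((1 - 2v_x²)/(1 - v_x²))·λ₀(G) ≤ λ₀(G - x) ≤ λ₀(G), where v_x denotes the x-coordinate of v. -/

import Mathlib

open scoped Classical

/-- The adjacency matrix of a simple graph, over `ℝ`. -/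
noncomputable def adjMat {V : Type*} [Fintype V] (G : SimpleGraph V) : Matrix V V ℝ :=
  Matrix.of fun i j => if G.Adj i j then (1 : ℝ) else 0

/-- The smallest (real) eigenvalue of a matrix. -/
noncomputable def matMinEig {V : Type*} [Fintype V] (A : Matrix V V ℝ) : ℝ :=
  sInf {μ : ℝ | ∃ v : V → ℝ, v ≠ 0 ∧ A.mulVec v = μ • v}

/-- The smallest eigenvalue of a graph. -/
noncomputable def minEig {V : Type*} [Fintype V] (G : SimpleGraph V) : ℝ :=
  matMinEig (adjMat G)

/-- The degree (valency) of a vertex. -/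
noncomputable def deg {V : Type*} [Fintype V] (G : SimpleGraph V) (v : V) : ℕ :=
  (G.neighborSet v).ncard

/-- The largest (real) eigenvalue of a matrix. -/
noncomputable def matMaxEig {V : Type*} [Fintype V] (A : Matrix V V ℝ) : ℝ :=
  sSup {μ : ℝ | ∃ v : V → ℝ, v ≠ 0 ∧ A.mulVec v = μ • v}

/-- The largest eigenvalue of a graph. -/
noncomputable def maxEig {V : Type*} [Fintype V] (G : SimpleGraph V) : ℝ :=
  matMaxEig (adjMat G)

section Aux
variable {m : Type*} [Fintype m] [DecidableEq m] {A : Matrix m m ℝ}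

lemma repr_dot (hA : A.IsHermitian) (u : EuclideanSpace ℝ m) (j : m) :
    hA.eigenvectorBasis.repr u j = dotProduct (hA.eigenvectorBasis j) u := by
  rw [OrthonormalBasis.repr_apply_apply]
  simp [PiLp.inner_apply, dotProduct, RCLike.inner_apply, mul_comm]

lemma repr_mulVec (hA : A.IsHermitian) (w : m → ℝ) (j : m) :
    hA.eigenvectorBasis.repr (WithLp.toLp 2 (A.mulVec w)) j
      = hA.eigenvalues j * hA.eigenvectorBasis.repr (WithLp.toLp 2 w) j := by
  have ht : Matrix.transpose A = A := by
    rw [← Matrix.conjTranspose_eq_transpose_of_trivial]; exact hA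
  have hv : A.mulVec (hA.eigenvectorBasis j)
      = hA.eigenvalues j • (hA.eigenvectorBasis j : m → ℝ) :=
    hA.mulVec_eigenvectorBasis j
  rw [repr_dot, repr_dot, WithLp.ofLp_toLp, WithLp.ofLp_toLp, Matrix.dotProduct_mulVec, ← Matrix.mulVec_transpose, ht, hv]
  simp [dotProduct, Finset.mul_sum, mul_assoc]

lemma eigSet_eq (hA : A.IsHermitian) :
    {μ : ℝ | ∃ v : m → ℝ, v ≠ 0 ∧ A.mulVec v = μ • v} = Set.range hA.eigenvalues := by
  ext μ
  constructor
  · rintro ⟨u, hu, he⟩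
    have h0 : hA.eigenvectorBasis.repr (WithLp.toLp 2 u) ≠ 0 := by
      simpa using hA.eigenvectorBasis.repr.map_eq_zero_iff.not.2 (show WithLp.toLp 2 u ≠ 0 by simpa using hu)
    obtain ⟨j, hj⟩ : ∃ j, hA.eigenvectorBasis.repr (WithLp.toLp 2 u) j ≠ 0 := by
      by_contra h; push_neg at h
      exact h0 (by ext j; simpa using h j)
    refine ⟨j, ?_⟩
    have h1 := repr_mulVec hA u j
    rw [he] at h1
    have h2 : hA.eigenvectorBasis.repr (WithLp.toLp 2 (μ • u : m → ℝ)) j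
        = μ * hA.eigenvectorBasis.repr (WithLp.toLp 2 u) j := by
      rw [repr_dot, repr_dot]
      simp [dotProduct, Finset.mul_sum, mul_assoc, mul_left_comm]
    rw [h2] at h1
    exact mul_right_cancel₀ hj h1.symm
  · rintro ⟨j, rfl⟩
    exact ⟨hA.eigenvectorBasis j, (by simpa using hA.eigenvectorBasis.orthonormal.ne_zero j),
      hA.mulVec_eigenvectorBasis j⟩

lemma le_matMaxEig (hA : A.IsHermitian) (j : m) : hA.eigenvalues j ≤ matMaxEig A := by
  apply le_csSup
  · rw [eigSet_eq hA]
    exact (Set.finite_range _).bddAbove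
  · rw [eigSet_eq hA]; exact ⟨j, rfl⟩

lemma rayleigh_le (hA : A.IsHermitian) [Nonempty m] (w : m → ℝ) :
    dotProduct w (A.mulVec w) ≤ matMaxEig A * dotProduct w w := by
  have key : ∀ x y : EuclideanSpace ℝ m, dotProduct (x : m → ℝ) y
      = ∑ j, hA.eigenvectorBasis.repr x j * hA.eigenvectorBasis.repr y j := by
    intro x y
    have h := hA.eigenvectorBasis.repr.inner_map_map x y
    simp only [PiLp.inner_apply, RCLike.inner_apply, starRingEnd_apply, star_trivial] at h
    rw [dotProduct]
    exact (Finset.sum_congr rfl fun i _ => mul_comm _ _).trans (h.symm.trans (Finset.sum_congr rfl fun i _ => mul_comm _ _))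
  rw [key (WithLp.toLp 2 w) (WithLp.toLp 2 (A.mulVec w)), key (WithLp.toLp 2 w) (WithLp.toLp 2 w)]
  have h1 : ∀ j, hA.eigenvectorBasis.repr (WithLp.toLp 2 w) j * hA.eigenvectorBasis.repr (WithLp.toLp 2 (A.mulVec w)) j
      = hA.eigenvalues j * (hA.eigenvectorBasis.repr (WithLp.toLp 2 w) j)^2 := by
    intro j; rw [repr_mulVec hA]; ring
  rw [Finset.mul_sum]
  refine Finset.sum_le_sum fun j _ => ?_
  rw [h1 j]
  have := le_matMaxEig hA j
  nlinarith [sq_nonneg (hA.eigenvectorBasis.repr (WithLp.toLp 2 w) j)]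

lemma adjMat_isHermitian {V : Type*} [Fintype V] (G : SimpleGraph V) :
    (adjMat G).IsHermitian := by
  unfold Matrix.IsHermitian
  ext i j
  simp only [Matrix.conjTranspose_apply, adjMat, Matrix.of_apply, star_trivial]
  rw [SimpleGraph.adj_comm]

end Aux

/-- **Stevanović.** Let `G` be a connected graph on at least two vertices, with largest
eigenvalue `λ₀(G)` and principal eigenvector `v` (positive, of Euclidean norm 1).
Then for each vertex `x`,
`(1 - 2 v_x²)/(1 - v_x²) · λ₀(G) ≤ λ₀(G - x) ≤ λ₀(G)`. -/
theorem stmt14 {n : ℕ} (hn : 2 ≤ n) (G : SimpleGraph (Fin n)) (hconn : G.Connected)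
    (v : Fin n → ℝ) (hpos : ∀ x, 0 < v x) (hnorm : ∑ x, (v x) ^ 2 = 1)
    (heig : (adjMat G).mulVec v = maxEig G • v) (x : Fin n) :
    (1 - 2 * (v x) ^ 2) / (1 - (v x) ^ 2) * maxEig G
        ≤ maxEig (G.induce ↑(Finset.univ.erase x)) ∧
      maxEig (G.induce ↑(Finset.univ.erase x)) ≤ maxEig G := by
  haveI : Nonempty (Fin n) := ⟨⟨0, by omega⟩⟩
  set lam := maxEig G with hlam
  set s : Finset (Fin n) := Finset.univ.erase x with hs
  set G' := G.induce (↑s : Set (Fin n)) with hG'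
  set A := adjMat G with hA_def
  set A' := adjMat G' with hA'_def
  have hA : A.IsHermitian := adjMat_isHermitian G
  have hA' : A'.IsHermitian := adjMat_isHermitian G'
  -- a second vertex
  obtain ⟨y, hyx⟩ : ∃ y : Fin n, y ≠ x :=
    Fintype.exists_ne_of_one_lt_card (by simp [Fintype.card_fin]; omega) x
  have hys : y ∈ s := Finset.mem_erase.2 ⟨hyx, Finset.mem_univ _⟩
  haveI hne' : Nonempty (↑(↑s : Set (Fin n))) := ⟨⟨y, hys⟩⟩
  -- entries of A'
  have hA'e : ∀ i j : (↑s : Set (Fin n)), A' i j = A (↑i) (↑j) := by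
    intro i j
    rfl
  -- eigen equation coordinatewise
  have hAv : ∀ i, ∑ j, A i j * v j = lam * v i := by
    intro i
    have := congrFun heig i
    simpa [Matrix.mulVec, dotProduct] using this
  have hAsymm : ∀ i j, A i j = A j i := fun i j => by
    conv_lhs => rw [← hA]
    simp [Matrix.conjTranspose_apply]
  have hAxx : A x x = 0 := by simp [hA_def, adjMat]
  set t := (v x) ^ 2 with ht
  -- sum splitting: over univ = over s + at x
  have hsplit : ∀ f : Fin n → ℝ, ∑ i, f i = (∑ i ∈ s, f i) + f x := by
    intro f
    rw [hs, ← Finset.sum_erase_add Finset.univ f (Finset.mem_univ x)]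
  -- row sums restricted to s
  have hrow : ∀ i, ∑ j ∈ s, A i j * v j = lam * v i - A i x * v x := by
    intro i
    have := hsplit (fun j => A i j * v j)
    rw [hAv i] at this
    linarith
  -- value of the restricted quadratic form
  have hQ : (∑ i ∈ s, ∑ j ∈ s, v i * (A i j * v j)) = lam * (1 - 2 * t) := by
    have h1 : ∀ i, ∑ j ∈ s, v i * (A i j * v j) = v i * (lam * v i - A i x * v x) := by
      intro i
      rw [← Finset.mul_sum, hrow i]
    have h2 : (∑ i ∈ s, ∑ j ∈ s, v i * (A i j * v j))
        = ∑ i ∈ s, (lam * (v i)^2 - v i * A i x * v x) := by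
      refine Finset.sum_congr rfl fun i _ => ?_
      rw [h1 i]; ring
    rw [h2, Finset.sum_sub_distrib, ← Finset.mul_sum]
    have h3 : ∑ i ∈ s, (v i)^2 = 1 - t := by
      have := hsplit (fun i => (v i)^2)
      rw [hnorm] at this; rw [ht]; linarith
    have h4 : ∑ i ∈ s, v i * A i x * v x = lam * t := by
      have h5 : ∑ i ∈ s, A x i * v i = lam * v x := by
        have := hrow x
        rw [hAxx] at this
        calc ∑ i ∈ s, A x i * v i = ∑ i ∈ s, A x i * v i := rfl
          _ = lam * v x - 0 * v x := this
          _ = lam * v x := by ring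
      calc ∑ i ∈ s, v i * A i x * v x = (∑ i ∈ s, A x i * v i) * v x := by
            rw [Finset.sum_mul]
            refine Finset.sum_congr rfl fun i _ => ?_
            rw [hAsymm i x]; ring
        _ = lam * v x * v x := by rw [h5]
        _ = lam * t := by rw [ht]; ring
    rw [h3, h4]; ring
  have h1t : ∑ i ∈ s, (v i)^2 = 1 - t := by
    have := hsplit (fun i => (v i)^2)
    rw [hnorm] at this; rw [ht]; linarith
  have h1tpos : 0 < 1 - t := by
    rw [← h1t]
    exact Finset.sum_pos (fun i _ => pow_pos (hpos i) 2) ⟨y, hys⟩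
  -- the restriction of v
  set u : (↑(s : Set (Fin n)) : Type) → ℝ := fun i => v ↑i with hu
  have hdot1 : dotProduct u (A'.mulVec u) = lam * (1 - 2 * t) := by
    rw [← hQ]
    simp only [dotProduct, Matrix.mulVec]
    rw [← Finset.sum_finset_coe (fun i => ∑ j ∈ s, v i * (A i j * v j)) s]
    refine Finset.sum_congr rfl fun i _ => ?_
    rw [Finset.mul_sum, ← Finset.sum_finset_coe (fun j => v ↑i * (A ↑i j * v j)) s]
    refine Finset.sum_congr rfl fun j _ => ?_
    rw [hA'e i j]
  have hdot2 : dotProduct u u = 1 - t := by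
    rw [← h1t]
    simp only [dotProduct]
    rw [← Finset.sum_finset_coe (fun i => (v i)^2) s]
    refine Finset.sum_congr rfl fun i _ => ?_
    rw [hu]; ring
  constructor
  · -- lower bound
    have hray := rayleigh_le hA' u
    rw [hdot1, hdot2] at hray
    rw [div_mul_eq_mul_div, div_le_iff₀ h1tpos]
    calc (1 - 2 * t) * lam = lam * (1 - 2 * t) := by ring
      _ ≤ matMaxEig A' * (1 - t) := hray
      _ = maxEig G' * (1 - t) := rfl
  · -- upper bound
    have hub : ∀ μ ∈ {μ : ℝ | ∃ w : (↑(s : Set (Fin n)) : Type) → ℝ,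
        w ≠ 0 ∧ A'.mulVec w = μ • w}, μ ≤ lam := by
      rintro μ ⟨w, hw0, hwe⟩
      -- extend w by zero
      set W : Fin n → ℝ := fun i => if h : i ∈ (↑s : Set (Fin n)) then w ⟨i, h⟩ else 0 with hW
      have hWx : W x = 0 := by
        rw [hW]
        simp [hs]
      have hWs : ∀ i : (↑s : Set (Fin n)), W ↑i = w i := by
        rintro ⟨i, hi⟩
        rw [hW]
        simp [hi]
      have hdW : dotProduct W (A.mulVec W) = dotProduct w (A'.mulVec w) := by
        simp only [dotProduct, Matrix.mulVec]
        rw [hsplit (fun i => W i * ∑ j, A i j * W j), hWx, zero_mul, add_zero]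
        rw [← Finset.sum_finset_coe (fun i => W i * ∑ j, A i j * W j) s]
        refine Finset.sum_congr rfl fun i _ => ?_
        rw [hWs i]
        congr 1
        rw [hsplit (fun j => A ↑i j * W j), hWx, mul_zero, add_zero]
        rw [← Finset.sum_finset_coe (fun j => A ↑i j * W j) s]
        refine Finset.sum_congr rfl fun j _ => ?_
        rw [hWs j, hA'e i j]
      have hdWW : dotProduct W W = dotProduct w w := by
        simp only [dotProduct]
        rw [hsplit (fun i => W i * W i), hWx, zero_mul, add_zero]
        rw [← Finset.sum_finset_coe (fun i => W i * W i) s]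
        refine Finset.sum_congr rfl fun i _ => ?_
        rw [hWs i]
      have hwpos : 0 < dotProduct w w := by
        simp only [dotProduct]
        obtain ⟨i, hi⟩ : ∃ i, w i ≠ 0 := by
          by_contra h; push_neg at h
          exact hw0 (funext h)
        exact Finset.sum_pos' (fun j _ => mul_self_nonneg _)
          ⟨i, Finset.mem_univ _, mul_self_pos.2 hi⟩
      have hmu : μ * dotProduct w w = dotProduct w (A'.mulVec w) := by
        rw [hwe]
        simp [dotProduct, Finset.mul_sum, mul_left_comm, mul_assoc]
      have hray := rayleigh_le hA W
      rw [hdW, hdWW, ← hmu] at hray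
      have : matMaxEig A = lam := rfl
      rw [this] at hray
      exact le_of_mul_le_mul_right hray hwpos
    have hnonempty : {μ : ℝ | ∃ w : (↑(s : Set (Fin n)) : Type) → ℝ,
        w ≠ 0 ∧ A'.mulVec w = μ • w}.Nonempty := by
      rw [eigSet_eq hA']
      exact Set.range_nonempty _
    exact csSup_le hnonempty hub
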